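/- Let α, β > 0 and set x = √2·α/β. For every φ > 0 one has the factorization 8φ⁷·V'(φ) = (φ⁴ − 1)·(β²φ⁸ − α²(1 + φ⁴)), and consequently V'(φ) = 0 if and only if φ = 1 or φ⁴ = (x/4)·(x + √(x² + 8)). -/

import Mathlib

noncomputable def V (α β φ : ℝ) : ℝ :=
  -((α ^ 2 + β ^ 2) / 16) * φ ^ 2 + (β ^ 2 / 48) * φ ^ 6 - (α ^ 2 / 48) / φ ^ 6

lemma root_unique (α β t r : ℝ) (hα : 0 < α) (hβ : 0 < β) (ht : 0 < t) (hr : 0 < r)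
    (h1 : β ^ 2 * t ^ 2 = α ^ 2 * (1 + t)) (h2 : β ^ 2 * r ^ 2 = α ^ 2 * (1 + r)) :
    t = r := by
  have key : (t - r) * (β ^ 2 * (t + r) - α ^ 2) = 0 := by linear_combination h1 - h2
  rcases mul_eq_zero.mp key with h' | h'
  · linarith [sub_eq_zero.mp h']
  · exfalso
    have ha : (β ^ 2 * t - α ^ 2) * t = α ^ 2 := by linear_combination h1
    have hb : 0 < β ^ 2 * t - α ^ 2 := by nlinarith [sq_nonneg α]
    have hc : 0 < β ^ 2 * r := by positivity
    nlinarith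

lemma pow4_one (φ : ℝ) (hφ : 0 < φ) (h : φ ^ 4 = 1) : φ = 1 := by
  have h1 : φ ≤ 1 := by nlinarith [pow_pos hφ 2, pow_pos hφ 3]
  have h2 : 1 ≤ φ := by nlinarith [pow_pos hφ 2, pow_pos hφ 3]
  linarith

lemma deriv_V (α β φ : ℝ) (hφ : φ ≠ 0) :
    deriv (V α β) φ = -((α ^ 2 + β ^ 2) / 16) * (2 * φ) + (β ^ 2 / 48) * (6 * φ ^ 5)
      + (α ^ 2 / 48) * (6 * φ ^ 5 / (φ ^ 6) ^ 2) := by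
  have h2 := (hasDerivAt_pow 2 φ).const_mul (-((α ^ 2 + β ^ 2) / 16))
  have h6 := (hasDerivAt_pow 6 φ).const_mul ((β ^ 2 / 48))
  have hi := ((hasDerivAt_pow 6 φ).inv (pow_ne_zero 6 hφ)).const_mul ((α ^ 2 / 48))
  have h := (h2.add h6).sub hi
  have h' : HasDerivAt (V α β)
      (-((α ^ 2 + β ^ 2) / 16) * (2 * φ) + (β ^ 2 / 48) * (6 * φ ^ 5)
        + (α ^ 2 / 48) * (6 * φ ^ 5 / (φ ^ 6) ^ 2)) φ := by
    have hfun : V α β = fun y : ℝ =>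
        -((α ^ 2 + β ^ 2) / 16) * y ^ 2 + β ^ 2 / 48 * y ^ 6 - α ^ 2 / 48 * (y ^ 6)⁻¹ := by
      funext y; simp [V, div_eq_mul_inv]
    rw [hfun]
    refine h.congr_deriv ?_
    push_cast
    ring
  exact h'.deriv

lemma root_eq (α β x : ℝ) (hα : 0 < α) (hβ : 0 < β) (hx : x = Real.sqrt 2 * α / β) :
    0 < (x / 4) * (x + Real.sqrt (x ^ 2 + 8)) ∧
    β ^ 2 * ((x / 4) * (x + Real.sqrt (x ^ 2 + 8))) ^ 2
      = α ^ 2 * (1 + (x / 4) * (x + Real.sqrt (x ^ 2 + 8))) := by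
  have hβ0 : β ≠ 0 := ne_of_gt hβ
  have hx2 : x ^ 2 * β ^ 2 = 2 * α ^ 2 := by
    have h2 : Real.sqrt 2 ^ 2 = 2 := Real.sq_sqrt (by norm_num)
    rw [hx]; field_simp; nlinarith [h2]
  have hxpos : 0 < x := by rw [hx]; positivity
  set s := Real.sqrt (x ^ 2 + 8) with hs_def
  have hs2 : s ^ 2 = x ^ 2 + 8 := Real.sq_sqrt (by positivity)
  have hspos : 0 < s := Real.sqrt_pos.mpr (by positivity)
  refine ⟨by positivity, ?_⟩
  linear_combination (β ^ 2 * x ^ 2 / 16) * hs2 + ((1 + x ^ 2 / 4 + x * s / 4) / 2) * hx2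

theorem stmt_4 (α β : ℝ) (hα : 0 < α) (hβ : 0 < β) (x : ℝ)
    (hx : x = Real.sqrt 2 * α / β) :
    ∀ φ : ℝ, 0 < φ →
      (8 * φ ^ 7 * deriv (V α β) φ
        = (φ ^ 4 - 1) * (β ^ 2 * φ ^ 8 - α ^ 2 * (1 + φ ^ 4))) ∧
      (deriv (V α β) φ = 0 ↔
        φ = 1 ∨ φ ^ 4 = (x / 4) * (x + Real.sqrt (x ^ 2 + 8))) := by
  obtain ⟨hrpos, hr⟩ := root_eq α β x hα hβ hx
  set r := (x / 4) * (x + Real.sqrt (x ^ 2 + 8)) with hr_def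
  intro φ hφ
  have hφ0 : φ ≠ 0 := ne_of_gt hφ
  have part1 : 8 * φ ^ 7 * deriv (V α β) φ
      = (φ ^ 4 - 1) * (β ^ 2 * φ ^ 8 - α ^ 2 * (1 + φ ^ 4)) := by
    rw [deriv_V α β φ hφ0]; field_simp; ring
  refine ⟨part1, ?_⟩
  constructor
  · intro h0
    have hprod : (φ ^ 4 - 1) * (β ^ 2 * φ ^ 8 - α ^ 2 * (1 + φ ^ 4)) = 0 := by
      rw [← part1, h0]; ring
    rcases mul_eq_zero.mp hprod with h | h
    · exact Or.inl (pow4_one φ hφ (by linarith [sub_eq_zero.mp h]))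
    · refine Or.inr (root_unique α β (φ ^ 4) r hα hβ (pow_pos hφ 4) hrpos ?_ hr)
      linear_combination h
  · intro h
    have h8 : (8 : ℝ) * φ ^ 7 ≠ 0 := by positivity
    have hz : 8 * φ ^ 7 * deriv (V α β) φ = 0 := by
      rw [part1]
      rcases h with h1 | h4
      · rw [h1]; ring
      · have hz' : β ^ 2 * (φ ^ 4) ^ 2 - α ^ 2 * (1 + φ ^ 4) = 0 := by
          rw [h4]; linarith [hr]
        linear_combination (φ ^ 4 - 1) * hz'
    exact (mul_eq_zero.mp hz).resolve_left h8
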